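/- Let p be a prime, G a group, and A a subgroup of the center of G. If the quotient G/A belongs to the class 𝒢(p), then A is topologically p-embedded in G: for every subgroup B of A of finite p-power index there is a normal subgroup N of G of finite p-power index with N ∩ A ≤ B. -/

import Mathlib

/-!
Common definitions for formalizing "Cohomology and profinite topologies for solvable
groups of finite rank" (K. Lorensen).

Group cohomology is defined via inhomogeneous cochains.  The continuous cohomology of the
pro-`p` (resp. profinite) completion of `G` with coefficients in a finite discrete module is
the direct limit, over the normal subgroups `N` of finite `p`-power (resp. finite) index
acting trivially on the module, of the cohomology of the quotients `G ⧸ N`; accordingly, the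
statement that the completion map induces an isomorphism on cohomology is rendered as:
the canonical (inflation) maps from this directed system to `H^*(G, M)` are jointly
surjective, and any class of the system killed in `H^*(G, M)` is killed at a deeper level of
the system.
-/

open Function TensorProduct

universe u v

namespace GoodProfinite

variable {G H : Type u} {M : Type v}

/-- The (multiplicative) group structure on `AddAut M` of the older library, where
`e₁ * e₂ = e₂.trans e₁`; the installed library makes `AddAut M` an additive group instead. -/
instance addAutGroupOld (A : Type v) [Add A] : Group (AddAut A) where
  mul g h := AddEquiv.trans h g
  one := AddEquiv.refl _
  inv := AddEquiv.symm
  mul_assoc _ _ _ := rfl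
  one_mul _ := rfl
  mul_one _ := rfl
  inv_mul_cancel := AddEquiv.self_trans_symm

/-- The differential on inhomogeneous cochains of a group `G` with coefficients in a
`G`-module `M` (the action given by `ρ : G →* AddAut M`). -/
def cochainD [Group G] [AddCommGroup M] (ρ : G →* AddAut M) (n : ℕ) :
    ((Fin n → G) → M) →+ ((Fin (n + 1) → G) → M) :=
  AddMonoidHom.mk'
    (fun f g =>
      ρ (g 0) (f fun i => g i.succ) +
        ∑ j : Fin (n + 1), (-1 : ℤ) ^ ((j : ℕ) + 1) • f (Fin.contractNth j (· * ·) g))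
    (by
      intro a b
      funext g
      simp only [Pi.add_apply, map_add, smul_add, Finset.sum_add_distrib]
      abel)

/-- The `n`-cocycles. -/
def cocycleGroup [Group G] [AddCommGroup M] (ρ : G →* AddAut M) (n : ℕ) :
    AddSubgroup ((Fin n → G) → M) :=
  (cochainD ρ n).ker

/-- The `n`-coboundaries. -/
def coboundaryGroup [Group G] [AddCommGroup M] (ρ : G →* AddAut M) :
    (n : ℕ) → AddSubgroup ((Fin n → G) → M)
  | 0 => ⊥
  | n + 1 => (cochainD ρ n).range

/-- The `n`-th group cohomology of `G` with coefficients in the `G`-module `M`. -/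
def groupCoh [Group G] [AddCommGroup M] (ρ : G →* AddAut M) (n : ℕ) : Type (max u v) :=
  cocycleGroup ρ n ⧸ (coboundaryGroup ρ n).addSubgroupOf (cocycleGroup ρ n)

instance [Group G] [AddCommGroup M] (ρ : G →* AddAut M) (n : ℕ) :
    AddCommGroup (groupCoh ρ n) :=
  inferInstanceAs (AddCommGroup (_ ⧸ _))

/-- Precomposition of cochains with a group homomorphism. -/
def precompCochain [Group G] [Group H] [AddCommGroup M] (f : G →* H) (n : ℕ) :
    ((Fin n → H) → M) →+ ((Fin n → G) → M) :=
  AddMonoidHom.mk' (fun c g => c fun i => f (g i)) (fun _ _ => rfl)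

lemma comp_contractNth [Group G] [Group H] (f : G →* H) {n : ℕ} (j : Fin (n + 1))
    (g : Fin (n + 1) → G) :
    (fun k => f (Fin.contractNth j (· * ·) g k)) =
      Fin.contractNth j (· * ·) fun i => f (g i) := by
  funext k
  unfold Fin.contractNth
  split_ifs <;> simp [map_mul]

lemma cochainD_precomp [Group G] [Group H] [AddCommGroup M] (f : G →* H)
    (ρ : H →* AddAut M) (ρ' : G →* AddAut M) (hcomp : ∀ g, ρ' g = ρ (f g)) (n : ℕ)
    (c : (Fin n → H) → M) :
    cochainD ρ' n (precompCochain f n c) = precompCochain f (n + 1) (cochainD ρ n c) := by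
  funext g
  show ρ' (g 0) (c fun i => f (g i.succ)) +
      ∑ j : Fin (n + 1), (-1 : ℤ) ^ ((j : ℕ) + 1) •
        c (fun i => f (Fin.contractNth j (· * ·) g i)) =
    ρ (f (g 0)) (c fun i => f (g i.succ)) +
      ∑ j : Fin (n + 1), (-1 : ℤ) ^ ((j : ℕ) + 1) •
        c (Fin.contractNth j (· * ·) fun i => f (g i))
  rw [hcomp]
  congr 1
  refine Finset.sum_congr rfl fun j _ => ?_
  rw [comp_contractNth]

/-- The map on cocycles induced by a group homomorphism with compatible actions. -/
def cocycleMap [Group G] [Group H] [AddCommGroup M] (f : G →* H) (ρ : H →* AddAut M)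
    (ρ' : G →* AddAut M) (hcomp : ∀ g, ρ' g = ρ (f g)) (n : ℕ) :
    cocycleGroup ρ n →+ cocycleGroup ρ' n :=
  AddMonoidHom.codRestrict ((precompCochain f n).comp (cocycleGroup ρ n).subtype) _
    (fun x => by
      have hx : cochainD ρ n x.1 = 0 := x.2
      show precompCochain f n x.1 ∈ (cochainD ρ' n).ker
      rw [AddMonoidHom.mem_ker, cochainD_precomp f ρ ρ' hcomp, hx, map_zero])

/-- The map `H^n(H, M) → H^n(G, M)` on group cohomology induced by a group homomorphism
`f : G →* H` and compatible actions (`ρ' = ρ ∘ f`); e.g. inflation maps. -/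
def cohMap [Group G] [Group H] [AddCommGroup M] (f : G →* H) (ρ : H →* AddAut M)
    (ρ' : G →* AddAut M) (hcomp : ∀ g, ρ' g = ρ (f g)) (n : ℕ) :
    groupCoh ρ n →+ groupCoh ρ' n :=
  QuotientAddGroup.map _ _ (cocycleMap f ρ ρ' hcomp n)
    (by
      intro x hx
      rw [AddSubgroup.mem_addSubgroupOf] at hx
      rw [AddSubgroup.mem_comap, AddSubgroup.mem_addSubgroupOf]
      match n, x, hx with
      | 0, x, hx =>
          have : x.1 = 0 := hx
          show (precompCochain f 0) x.1 ∈ (⊥ : AddSubgroup _)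
          rw [this, map_zero]
          exact AddSubgroup.mem_bot.mpr rfl
      | (m + 1), x, hx =>
          obtain ⟨b, hb⟩ := hx
          show (precompCochain f (m + 1)) x.1 ∈ (cochainD ρ' m).range
          exact ⟨precompCochain f m b, by rw [cochainD_precomp f ρ ρ' hcomp, hb]⟩)

/-- The action of `G ⧸ N` on `M` induced by an action of `G` on which `N` acts trivially. -/
def quotAut [Group G] [AddCommGroup M] (ρ : G →* AddAut M) (N : Subgroup G) [N.Normal]
    (h : ∀ x ∈ N, ρ x = 1) : G ⧸ N →* AddAut M :=
  QuotientGroup.lift N ρ h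

/-- The natural projection `G ⧸ N' →* G ⧸ N` when `N' ≤ N`. -/
def quotMapHom [Group G] (N N' : Subgroup G) [N.Normal] [N'.Normal] (hle : N' ≤ N) :
    G ⧸ N' →* G ⧸ N :=
  QuotientGroup.map N' N (MonoidHom.id G) fun _ hx => hle hx

lemma quotAut_comp_quotMap [Group G] [AddCommGroup M] (ρ : G →* AddAut M)
    (N N' : Subgroup G) [N.Normal] [N'.Normal] (hle : N' ≤ N) (h : ∀ x ∈ N, ρ x = 1) :
    ∀ x : G ⧸ N', quotAut ρ N' (fun g hg => h g (hle hg)) x =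
      quotAut ρ N h (quotMapHom N N' hle x) := fun x =>
  QuotientGroup.induction_on x fun _ => rfl

/-- The canonical map from the continuous cohomology of the pro-`p` completion of `G`
(the direct limit over normal subgroups of finite `p`-power index acting trivially on `M`
of the cohomology of the corresponding quotients) to `H^*(G, M)` is an isomorphism in
every degree. -/
def ProPCompletionCohIso (p : ℕ) (G : Type u) [Group G] (M : Type v) [AddCommGroup M]
    (ρ : G →* AddAut M) : Prop :=
  ∀ n : ℕ,
    (∀ x : groupCoh ρ n,
      ∃ (N : Subgroup G) (hN : N.Normal),
        haveI := hN
        ∃ (_ : ∃ k, N.index = p ^ k) (h1 : ∀ y ∈ N, ρ y = 1)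
          (z : groupCoh (quotAut ρ N h1) n),
          cohMap (QuotientGroup.mk' N) (quotAut ρ N h1) ρ (fun _ => rfl) n z = x) ∧
    (∀ (N : Subgroup G) (hN : N.Normal),
      haveI := hN
      ∀ (_ : ∃ k, N.index = p ^ k) (h1 : ∀ y ∈ N, ρ y = 1)
        (z : groupCoh (quotAut ρ N h1) n),
        cohMap (QuotientGroup.mk' N) (quotAut ρ N h1) ρ (fun _ => rfl) n z = 0 →
        ∃ (N' : Subgroup G) (hN' : N'.Normal),
          haveI := hN'
          ∃ (_ : ∃ k, N'.index = p ^ k) (hle : N' ≤ N),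
            cohMap (quotMapHom N N' hle) (quotAut ρ N h1)
              (quotAut ρ N' fun g hg => h1 g (hle hg))
              (quotAut_comp_quotMap ρ N N' hle h1) n z = 0)

/-- The analogue of `ProPCompletionCohIso` for the full profinite completion: the canonical
map from the continuous cohomology of the profinite completion of `G` to `H^*(G, M)` is an
isomorphism in every degree. -/
def ProfiniteCompletionCohIso (G : Type u) [Group G] (M : Type v) [AddCommGroup M]
    (ρ : G →* AddAut M) : Prop :=
  ∀ n : ℕ,
    (∀ x : groupCoh ρ n,
      ∃ (N : Subgroup G) (hN : N.Normal),
        haveI := hN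
        ∃ (_ : N.FiniteIndex) (h1 : ∀ y ∈ N, ρ y = 1)
          (z : groupCoh (quotAut ρ N h1) n),
          cohMap (QuotientGroup.mk' N) (quotAut ρ N h1) ρ (fun _ => rfl) n z = x) ∧
    (∀ (N : Subgroup G) (hN : N.Normal),
      haveI := hN
      ∀ (_ : N.FiniteIndex) (h1 : ∀ y ∈ N, ρ y = 1)
        (z : groupCoh (quotAut ρ N h1) n),
        cohMap (QuotientGroup.mk' N) (quotAut ρ N h1) ρ (fun _ => rfl) n z = 0 →
        ∃ (N' : Subgroup G) (hN' : N'.Normal),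
          haveI := hN'
          ∃ (_ : N'.FiniteIndex) (hle : N' ≤ N),
            cohMap (quotMapHom N N' hle) (quotAut ρ N h1)
              (quotAut ρ N' fun g hg => h1 g (hle hg))
              (quotAut_comp_quotMap ρ N N' hle h1) n z = 0)

/-- The class `𝒢(p)`: the pro-`p` completion map `G → Ĝ_p` induces an isomorphism
`H^*(Ĝ_p, M) → H^*(G, M)` for every discrete `Ĝ_p`-module `M` of finite `p`-power order,
i.e. for every `G`-module `M` of finite `p`-power order whose action factors through a
quotient of finite `p`-power index. -/
def InGp (p : ℕ) (G : Type u) [Group G] : Prop :=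
  ∀ (M : Type u) [AddCommGroup M] (ρ : G →* AddAut M),
    (∃ k, Nat.card M = p ^ k) →
    (∃ N : Subgroup G, N.Normal ∧ (∃ k, N.index = p ^ k) ∧ ∀ y ∈ N, ρ y = 1) →
    ProPCompletionCohIso p G M ρ

/-- The class `𝒢*(p)`: the profinite completion map `G → Ĝ` induces an isomorphism
`H^*(Ĝ, M) → H^*(G, M)` for every discrete `Ĝ`-module `M` of finite `p`-power order,
i.e. for every `G`-module `M` of finite `p`-power order whose action factors through a
quotient of finite index. -/
def InGpStar (p : ℕ) (G : Type u) [Group G] : Prop :=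
  ∀ (M : Type u) [AddCommGroup M] (ρ : G →* AddAut M),
    (∃ k, Nat.card M = p ^ k) →
    (∃ N : Subgroup G, N.Normal ∧ N.FiniteIndex ∧ ∀ y ∈ N, ρ y = 1) →
    ProfiniteCompletionCohIso G M ρ

/-- The class `ℱ𝒮`: groups having only finitely many subgroups of each finite index. -/
def InFS (G : Type u) [Group G] : Prop :=
  ∀ n : ℕ, n ≠ 0 → {H : Subgroup G | H.index = n}.Finite

/-- The class `ℱℋ`: groups `G` such that `H^n(G, M)` is finite for every finite
`G`-module `M` and every `n ≥ 0`. -/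
def InFH (G : Type u) [Group G] : Prop :=
  ∀ (M : Type u) [AddCommGroup M] [Finite M] (ρ : G →* AddAut M) (n : ℕ),
    Finite (groupCoh ρ n)

/-- An abelian group has finite torsion-free rank iff `ℚ ⊗ A` is finite dimensional. -/
def HasFiniteTorsionFreeRank (A : Type v) [CommGroup A] : Prop :=
  Module.Finite ℚ (ℚ ⊗[ℤ] (Additive A))

/-- An abelian group has finite `p`-rank (its `p`-torsion subgroup is a direct sum of
finitely many cyclic and quasicyclic groups) iff its `p`-socle is finite. -/
def HasFinitePRank (p : ℕ) (A : Type v) [CommGroup A] : Prop :=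
  {a : A | a ^ p = 1}.Finite

/-- `G` has finite abelian section rank: every abelian section of `G` has finite
torsion-free rank and finite `p`-rank for every prime `p`. -/
def IsFAR (G : Type u) [Group G] : Prop :=
  ∀ (H : Subgroup G) (A : Type u) [CommGroup A] (φ : H →* A), Surjective φ →
    HasFiniteTorsionFreeRank A ∧ ∀ p : ℕ, p.Prime → HasFinitePRank p A

/-- The Prüfer `p`-group `C_{p^∞}`: the subgroup of `p`-power order elements of `ℚ/ℤ`. -/
def pruferSubgroup (p : ℕ) : AddSubgroup (AddCircle (1 : ℚ)) where
  carrier := {x | ∃ n : ℕ, p ^ n • x = 0}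
  zero_mem' := ⟨0, smul_zero _⟩
  add_mem' := by
    rintro a b ⟨m, hm⟩ ⟨n, hn⟩
    refine ⟨m + n, ?_⟩
    have ha : p ^ (m + n) • a = 0 := by rw [pow_add, mul_comm, mul_smul, hm, smul_zero]
    have hb : p ^ (m + n) • b = 0 := by rw [pow_add, mul_smul, hn, smul_zero]
    rw [smul_add, ha, hb, add_zero]
  neg_mem' := by
    rintro a ⟨m, hm⟩
    exact ⟨m, by rw [smul_neg, hm, neg_zero]⟩

/-- `G` has a subgroup isomorphic to the Prüfer `p`-group `C_{p^∞}`. -/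
def HasPruferSubgroup (p : ℕ) (G : Type u) [Group G] : Prop :=
  ∃ H : Subgroup G, Nonempty (H ≃* Multiplicative (pruferSubgroup p))

/-- `G` has a section (quotient of a subgroup) isomorphic to the Prüfer `p`-group, i.e.
`p ∈ spec G`. -/
def HasPruferSection (p : ℕ) (G : Type u) [Group G] : Prop :=
  ∃ (H : Subgroup G) (φ : H →* Multiplicative (pruferSubgroup p)), Surjective φ

/-- `H ≤_t G`: `H` is topologically embedded in `G`, i.e. the profinite topology of `G`
induces the full profinite topology on `H`. -/
def TopEmbedded {G : Type u} [Group G] (H : Subgroup G) : Prop :=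
  ∀ K : Subgroup H, K.Normal → K.FiniteIndex →
    ∃ L : Subgroup G, L.Normal ∧ L.FiniteIndex ∧ L.subgroupOf H ≤ K

/-- `H ≤_{t(p)} G`: `H` is topologically `p`-embedded in `G`, i.e. the pro-`p` topology of
`G` induces the full pro-`p` topology on `H`. -/
def TopPEmbedded (p : ℕ) {G : Type u} [Group G] (H : Subgroup G) : Prop :=
  ∀ K : Subgroup H, K.Normal → (∃ k, K.index = p ^ k) →
    ∃ L : Subgroup G, L.Normal ∧ (∃ k, L.index = p ^ k) ∧ L.subgroupOf H ≤ K

/-- The pro-`p` topology on `G` is homogeneous: every subgroup of `G` is topologically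
`p`-embedded in `G`. -/
def PHomogeneous (p : ℕ) (G : Type u) [Group G] : Prop :=
  ∀ H : Subgroup G, TopPEmbedded p H

/-- The `p`-residual of `G`: the kernel of the pro-`p` completion map, i.e. the
intersection of all normal subgroups of finite `p`-power index. -/
def pResidual (p : ℕ) (G : Type u) [Group G] : Subgroup G :=
  ⨅ (N : Subgroup G) (_ : N.Normal) (_ : ∃ k, N.index = p ^ k), N

/-- A `p'`-group: every element has finite order coprime to `p`. -/
def IsPPrimeGroup (p : ℕ) (G : Type u) [Group G] : Prop :=
  ∀ g : G, IsOfFinOrder g ∧ Nat.Coprime (orderOf g) p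

/-- The profinite topology on `G`, with the cosets of the normal subgroups of finite index
as basic open sets. -/
def profiniteTopology (G : Type u) [Group G] : TopologicalSpace G :=
  ⨅ (N : Subgroup G) (_ : N.Normal) (_ : N.FiniteIndex),
    TopologicalSpace.induced (QuotientGroup.mk (s := N)) ⊥

lemma normal_of_le_center {G : Type u} [Group G] {A : Subgroup G}
    (hA : A ≤ Subgroup.center G) : A.Normal :=
  ⟨fun a ha g => by
    have hc := (Subgroup.mem_center_iff.mp (hA ha)) g
    have : g * a * g⁻¹ = a := by rw [hc]; group
    rwa [this]⟩

section AuxExt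

variable {Q' : Type*} [Group Q'] {M' : Type*} [AddCommGroup M']

lemma eq_of_sub_eq_of_eq_zero {a b c : M'} (h1 : a - b = c) (h2 : c = 0) : a = b := by
  rw [h2] at h1; exact sub_eq_zero.mp h1

lemma cochainD_one_apply' (ρ : Q' →* AddAut M') (b : (Fin 1 → Q') → M') (q r : Q') :
    cochainD ρ 1 b ![q, r] = ρ q (b ![r]) - b ![q * r] + b ![q] := by
  have h0 : Fin.contractNth (0 : Fin 2) (· * ·) ![q, r] = ![q * r] := by
    funext i; fin_cases i; rfl
  have h1 : Fin.contractNth (1 : Fin 2) (· * ·) ![q, r] = ![q] := by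
    funext i; fin_cases i; rfl
  have hs : (fun i : Fin 1 => (![q, r]) i.succ) = ![r] := by
    funext i; fin_cases i; rfl
  show ρ (![q,r] 0) (b fun i => ![q,r] i.succ)
      + ∑ j : Fin 2, (-1 : ℤ) ^ ((j : ℕ) + 1) • b (Fin.contractNth j (· * ·) ![q,r]) = _
  rw [Fin.sum_univ_two, h0, h1, hs]
  show ρ q (b ![r]) + ((-1 : ℤ) ^ (0 + 1) • b ![q*r] + (-1 : ℤ) ^ (1 + 1) • b ![q]) = _
  norm_num
  abel

lemma cochainD_two_apply' (ρ : Q' →* AddAut M') (c : (Fin 2 → Q') → M') (q r t : Q') :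
    cochainD ρ 2 c ![q, r, t] =
      ρ q (c ![r, t]) - c ![q * r, t] + c ![q, r * t] - c ![q, r] := by
  have h0 : Fin.contractNth (0 : Fin 3) (· * ·) ![q, r, t] = ![q * r, t] := by
    funext i; fin_cases i <;> rfl
  have h1 : Fin.contractNth (1 : Fin 3) (· * ·) ![q, r, t] = ![q, r * t] := by
    funext i; fin_cases i <;> rfl
  have h2 : Fin.contractNth (2 : Fin 3) (· * ·) ![q, r, t] = ![q, r] := by
    funext i; fin_cases i <;> rfl
  have hs : (fun i : Fin 2 => (![q, r, t]) i.succ) = ![r, t] := by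
    funext i; fin_cases i <;> rfl
  show ρ (![q,r,t] 0) (c fun i => ![q,r,t] i.succ)
      + ∑ j : Fin 3, (-1 : ℤ) ^ ((j : ℕ) + 1) • c (Fin.contractNth j (· * ·) ![q,r,t]) = _
  rw [Fin.sum_univ_three, h0, h1, h2, hs]
  show ρ q (c ![r,t]) + ((-1 : ℤ) ^ (0 + 1) • c ![q*r,t] + (-1 : ℤ) ^ (1 + 1) • c ![q,r*t]
      + (-1 : ℤ) ^ (2 + 1) • c ![q,r]) = _
  norm_num
  abel

/-- The central extension of `Q'` by `M'` determined by a (not necessarily normalized)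
2-cocycle `c` with trivial action. -/
def extGroup (c : (Fin 2 → Q') → M')
    (hc : ∀ q r t : Q', c ![r, t] - c ![q * r, t] + c ![q, r * t] - c ![q, r] = 0) :
    Group (M' × Q') where
  mul x y := (x.1 + y.1 + c ![x.2, y.2], x.2 * y.2)
  one := (-c ![1, 1], 1)
  inv x := (-x.1 - c ![x.2, x.2⁻¹] - c ![1, 1], x.2⁻¹)
  mul_assoc x y z := by
    refine Prod.ext ?_ (mul_assoc x.2 y.2 z.2)
    show x.1 + y.1 + c ![x.2, y.2] + z.1 + c ![x.2 * y.2, z.2]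
        = x.1 + (y.1 + z.1 + c ![y.2, z.2]) + c ![x.2, y.2 * z.2]
    exact eq_of_sub_eq_of_eq_zero (by abel) (neg_eq_zero.mpr (hc x.2 y.2 z.2))
  one_mul x := by
    have h' := hc 1 1 x.2
    simp only [one_mul] at h'
    have e1 : c ![(1 : Q'), x.2] = c ![1, 1] := eq_of_sub_eq_of_eq_zero (by abel) h'
    refine Prod.ext ?_ (one_mul x.2)
    show -c ![1, 1] + x.1 + c ![1, x.2] = x.1
    rw [e1]; abel
  mul_one x := by
    have h' := hc x.2 1 1
    simp only [mul_one, one_mul] at h'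
    have e2 : c ![x.2, (1 : Q')] = c ![1, 1] :=
      eq_of_sub_eq_of_eq_zero (by abel) (neg_eq_zero.mpr h')
    refine Prod.ext ?_ (mul_one x.2)
    show x.1 + -c ![1, 1] + c ![x.2, 1] = x.1
    rw [e2]; abel
  inv_mul_cancel x := by
    have h1 := hc 1 1 x.2
    simp only [one_mul] at h1
    have e1 : c ![(1 : Q'), x.2] = c ![1, 1] := eq_of_sub_eq_of_eq_zero (by abel) h1
    have h2 := hc x.2 1 1
    simp only [mul_one, one_mul] at h2
    have e2 : c ![x.2, (1 : Q')] = c ![1, 1] :=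
      eq_of_sub_eq_of_eq_zero (by abel) (neg_eq_zero.mpr h2)
    have h3 := hc x.2 x.2⁻¹ x.2
    rw [mul_inv_cancel, inv_mul_cancel, e1, e2] at h3
    have e3 : c ![x.2⁻¹, x.2] = c ![x.2, x.2⁻¹] := eq_of_sub_eq_of_eq_zero (by abel) h3
    refine Prod.ext ?_ (inv_mul_cancel x.2)
    show -x.1 - c ![x.2, x.2⁻¹] - c ![1, 1] + x.1 + c ![x.2⁻¹, x.2] = -c ![1, 1]
    rw [e3]; abel

end AuxExt

/-- Lemma 2.8: if `A ≤ Z(G)` and `G/A ∈ 𝒢(p)`, then `A ≤_{t(p)} G`. -/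
theorem central_topPEmbedded (p : ℕ) (hp : p.Prime) (G : Type u) [Group G]
    (A : Subgroup G) (hA : A ≤ Subgroup.center G)
    (hQ : haveI := normal_of_le_center hA; InGp p (G ⧸ A)) : TopPEmbedded p A := by
  haveI hAn : A.Normal := normal_of_le_center hA
  intro K hKn hKidx
  haveI := hKn
  -- centrality
  have cent : ∀ (a : ↥A) (g : G), g * (a : G) = (a : G) * g := fun a g =>
    Subgroup.mem_center_iff.mp (hA a.2) g
  -- the coefficient module
  have commQ : ∀ x y : ↥A ⧸ K, x * y = y * x := fun x y =>
    QuotientGroup.induction_on x fun a =>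
      QuotientGroup.induction_on y fun b => by
        rw [← QuotientGroup.mk_mul, ← QuotientGroup.mk_mul]
        exact congrArg (QuotientGroup.mk (s := K)) (Subtype.ext (cent b ↑a))
  letI : CommGroup (↥A ⧸ K) :=
    { (inferInstance : Group (↥A ⧸ K)) with mul_comm := commQ }
  let ρ : (G ⧸ A) →* AddAut (Additive (↥A ⧸ K)) := 1
  let μ : ↥A → (Additive (↥A ⧸ K)) := fun a => Additive.ofMul (QuotientGroup.mk (s := K) a)
  have μmul : ∀ a b : ↥A, μ (a * b) = μ a + μ b := fun a b => rfl
  -- section of G → G/A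
  let s : G ⧸ A → G := fun q => q.out
  have hs : ∀ q : G ⧸ A, (QuotientGroup.mk (s q) : G ⧸ A) = q := fun q =>
    QuotientGroup.out_eq' q
  have memA : ∀ g : G, (QuotientGroup.mk g : G ⧸ A) = 1 → g ∈ A := fun g h =>
    (QuotientGroup.eq_one_iff g).mp h
  -- the factor set of the extension
  let aA : G ⧸ A → G ⧸ A → ↥A := fun q r =>
    ⟨s q * s r * (s (q * r))⁻¹, by
      apply memA
      rw [QuotientGroup.mk_mul, QuotientGroup.mk_mul, QuotientGroup.mk_inv, hs, hs, hs]
      group⟩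
  have keyA : ∀ q r t : G ⧸ A, aA q r * aA (q * r) t = aA r t * aA q (r * t) := by
    intro q r t
    refine Subtype.ext ?_
    show (s q * s r * (s (q * r))⁻¹) * (s (q * r) * s t * (s ((q * r) * t))⁻¹)
        = (s r * s t * (s (r * t))⁻¹) * (s q * s (r * t) * (s (q * (r * t)))⁻¹)
    rw [mul_assoc q r t]
    have hx : (s r * s t * (s (r * t))⁻¹) * s q = s q * (s r * s t * (s (r * t))⁻¹) :=
      (cent (aA r t) (s q)).symm
    have h2 : (s r * s t * (s (r * t))⁻¹) * (s q * s (r * t) * (s (q * (r * t)))⁻¹)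
        = ((s r * s t * (s (r * t))⁻¹) * s q) * (s (r * t) * (s (q * (r * t)))⁻¹) := by
      group
    rw [h2, hx]
    group
  -- the 2-cocycle of the central extension
  let f : (Fin 2 → G ⧸ A) → (Additive (↥A ⧸ K)) := fun g => μ (aA (g 0) (g 1))
  have hf : f ∈ cocycleGroup (M := Additive (↥A ⧸ K)) ρ 2 := by
    show cochainD ρ 2 f = 0
    funext g
    have hg : g = ![g 0, g 1, g 2] := by funext i; fin_cases i <;> rfl
    rw [hg, cochainD_two_apply']
    have hρ : ∀ m : (Additive (↥A ⧸ K)), ρ (g 0) m = m := fun m => rfl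
    have hkey := congrArg μ (keyA (g 0) (g 1) (g 2))
    rw [μmul, μmul] at hkey
    have hf2 : ∀ q r : G ⧸ A, f ![q, r] = μ (aA q r) := fun q r => rfl
    rw [hf2, hf2, hf2, hf2, hρ]
    show μ (aA (g 1) (g 2)) - μ (aA (g 0 * g 1) (g 2)) + μ (aA (g 0) (g 1 * g 2))
        - μ (aA (g 0) (g 1)) = (0 : ((Fin 3 → G ⧸ A) → (Additive (↥A ⧸ K)))) ![g 0, g 1, g 2]
    show _ = (0 : (Additive (↥A ⧸ K)))
    calc μ (aA (g 1) (g 2)) - μ (aA (g 0 * g 1) (g 2)) + μ (aA (g 0) (g 1 * g 2))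
          - μ (aA (g 0) (g 1))
        = (μ (aA (g 1) (g 2)) + μ (aA (g 0) (g 1 * g 2)))
          - (μ (aA (g 0) (g 1)) + μ (aA (g 0 * g 1) (g 2))) := by abel
      _ = 0 := by rw [← hkey]; exact sub_self _
  -- apply the cohomology isomorphism in degree 2
  have hcard : ∃ k, Nat.card (Additive (↥A ⧸ K)) = p ^ k := by
    obtain ⟨k, hk⟩ := hKidx
    exact ⟨k, hk ▸ rfl⟩
  have htriv : ∃ N : Subgroup (G ⧸ A), N.Normal ∧ (∃ k, N.index = p ^ k) ∧
      ∀ y ∈ N, ρ y = 1 := by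
    refine ⟨⊤, inferInstance, ⟨0, by simp [Subgroup.index_top]⟩, fun y _ => rfl⟩
  obtain ⟨Nb, hNbn, hNbidx, h1, z, hz⟩ :=
    (hQ (Additive (↥A ⧸ K)) ρ hcard htriv 2).1 (QuotientAddGroup.mk ⟨f, hf⟩)
  haveI := hNbn
  obtain ⟨c, rfl⟩ := QuotientAddGroup.mk'_surjective _ z
  -- extract the coboundary relating `f` to the inflation of `c`
  have hz' : QuotientAddGroup.mk
      (cocycleMap (QuotientGroup.mk' Nb) (quotAut ρ Nb h1) ρ (fun _ => rfl) 2 c)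
      = QuotientAddGroup.mk (s := (coboundaryGroup ρ 2).addSubgroupOf (cocycleGroup ρ 2))
        ⟨f, hf⟩ := hz
  rw [QuotientAddGroup.eq, AddSubgroup.mem_addSubgroupOf] at hz'
  have hz'' : (((-(cocycleMap (QuotientGroup.mk' Nb) (quotAut ρ Nb h1) ρ (fun _ => rfl) 2 c)
      + ⟨f, hf⟩ : cocycleGroup ρ 2)) : (Fin 2 → G ⧸ A) → Additive (↥A ⧸ K))
      ∈ (cochainD ρ 1).range := hz'
  obtain ⟨b, hb⟩ := hz''
  have rel : ∀ q r : G ⧸ A, μ (aA q r)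
      = c.1 ![(QuotientGroup.mk q : (G ⧸ A) ⧸ Nb), QuotientGroup.mk r]
        + (b ![r] - b ![q * r] + b ![q]) := by
    intro q r
    have h' := congrFun hb ![q, r]
    rw [cochainD_one_apply'] at h'
    have hρ1 : ρ q (b ![r]) = b ![r] := rfl
    have hrhs : (((-(cocycleMap (QuotientGroup.mk' Nb) (quotAut ρ Nb h1) ρ
        (fun _ => rfl) 2 c) + ⟨f, hf⟩ : cocycleGroup ρ 2)) :
          (Fin 2 → G ⧸ A) → Additive (↥A ⧸ K)) ![q, r]
        = -(c.1 ![(QuotientGroup.mk q : (G ⧸ A) ⧸ Nb), QuotientGroup.mk r]) + μ (aA q r) := by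
      have hπ : (fun i => (QuotientGroup.mk' Nb) ((![q, r] : Fin 2 → G ⧸ A) i))
          = ![(QuotientGroup.mk q : (G ⧸ A) ⧸ Nb), QuotientGroup.mk r] := by
        funext i; fin_cases i <;> rfl
      show -(c.1 fun i => (QuotientGroup.mk' Nb) ((![q, r] : Fin 2 → G ⧸ A) i)) + f ![q, r]
          = _
      rw [hπ]
      rfl
    rw [hrhs, hρ1] at h'
    rw [h']
    abel
  -- `c` is a cocycle (with trivial action) on the quotient
  have hρb : ∀ (x : (G ⧸ A) ⧸ Nb) (m : Additive (↥A ⧸ K)), quotAut ρ Nb h1 x m = m :=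
    fun x m => QuotientGroup.induction_on x fun _ => rfl
  have hc0 : cochainD (quotAut ρ Nb h1) 2 c.1 = 0 := c.2
  have hc' : ∀ q r t : (G ⧸ A) ⧸ Nb,
      c.1 ![r, t] - c.1 ![q * r, t] + c.1 ![q, r * t] - c.1 ![q, r] = 0 := by
    intro q r t
    have h' := congrFun hc0 ![q, r, t]
    rw [cochainD_two_apply', hρb] at h'
    exact h'
  -- the central extension group defined by `c`
  letI grpX : Group ((Additive (↥A ⧸ K)) × ((G ⧸ A) ⧸ Nb)) := extGroup c.1 hc'
  -- the homomorphism from G to the extension group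
  let aG : G → ↥A := fun g =>
    ⟨g * (s (QuotientGroup.mk g))⁻¹, by
      apply memA
      rw [QuotientGroup.mk_mul, QuotientGroup.mk_inv, hs]
      group⟩
  have keyG : ∀ g h : G,
      aG (g * h) = aG g * aG h * aA (QuotientGroup.mk g) (QuotientGroup.mk h) := by
    intro g h
    refine Subtype.ext ?_
    show g * h * (s (QuotientGroup.mk (g * h)))⁻¹
        = (g * (s (QuotientGroup.mk g))⁻¹) * (h * (s (QuotientGroup.mk h))⁻¹)
          * (s (QuotientGroup.mk g) * s (QuotientGroup.mk h)
            * (s (QuotientGroup.mk g * QuotientGroup.mk h))⁻¹)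
    rw [QuotientGroup.mk_mul]
    have hx : (s (QuotientGroup.mk g))⁻¹ * (h * (s (QuotientGroup.mk h))⁻¹)
        = (h * (s (QuotientGroup.mk h))⁻¹) * (s (QuotientGroup.mk g))⁻¹ :=
      cent (aG h) (s (QuotientGroup.mk g))⁻¹
    have h2 : (g * (s (QuotientGroup.mk g))⁻¹) * (h * (s (QuotientGroup.mk h))⁻¹)
          * (s (QuotientGroup.mk g) * s (QuotientGroup.mk h)
            * (s (QuotientGroup.mk g * QuotientGroup.mk h))⁻¹)
        = g * ((s (QuotientGroup.mk g))⁻¹ * (h * (s (QuotientGroup.mk h))⁻¹))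
          * (s (QuotientGroup.mk g) * s (QuotientGroup.mk h)
            * (s (QuotientGroup.mk g * QuotientGroup.mk h))⁻¹) := by
      group
    rw [h2, hx]
    group
  let φfun : G → (Additive (↥A ⧸ K)) × ((G ⧸ A) ⧸ Nb) := fun g =>
    (μ (aG g) + b ![QuotientGroup.mk g],
      QuotientGroup.mk (QuotientGroup.mk g : G ⧸ A))
  have φmul : ∀ g h : G, φfun (g * h) = φfun g * φfun h := by
    intro g h
    show φfun (g * h) =
      ((μ (aG g) + b ![QuotientGroup.mk g]) + (μ (aG h) + b ![QuotientGroup.mk h])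
        + c.1 ![(QuotientGroup.mk (QuotientGroup.mk g : G ⧸ A) : (G ⧸ A) ⧸ Nb),
            QuotientGroup.mk (QuotientGroup.mk h : G ⧸ A)],
        (QuotientGroup.mk (QuotientGroup.mk g : G ⧸ A) : (G ⧸ A) ⧸ Nb)
          * QuotientGroup.mk (QuotientGroup.mk h : G ⧸ A))
    refine Prod.ext ?_ ?_
    · show μ (aG (g * h)) + b ![QuotientGroup.mk (g * h)] = _
      rw [keyG g h, μmul, μmul, QuotientGroup.mk_mul,
        rel (QuotientGroup.mk g) (QuotientGroup.mk h)]
      abel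
    · show (QuotientGroup.mk (QuotientGroup.mk (g * h) : G ⧸ A) : (G ⧸ A) ⧸ Nb) = _
      rw [QuotientGroup.mk_mul, QuotientGroup.mk_mul]
  let φ : G →* (Additive (↥A ⧸ K)) × ((G ⧸ A) ⧸ Nb) := MonoidHom.mk' φfun φmul
  refine ⟨φ.ker, MonoidHom.normal_ker φ, ?_, ?_⟩
  · -- the kernel has p-power index
    obtain ⟨k1, hk1⟩ := hcard
    obtain ⟨k2, hk2⟩ := hNbidx
    have hXcard : Nat.card ((Additive (↥A ⧸ K)) × ((G ⧸ A) ⧸ Nb)) = p ^ (k1 + k2) := by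
      rw [Nat.card_prod, hk1]
      have : Nat.card ((G ⧸ A) ⧸ Nb) = p ^ k2 := hk2
      rw [this, pow_add]
    have hdvd : Nat.card ↥φ.range ∣ p ^ (k1 + k2) :=
      hXcard ▸ Subgroup.card_subgroup_dvd_card φ.range
    obtain ⟨j, _, hj⟩ := (Nat.dvd_prime_pow hp).mp hdvd
    exact ⟨j, by rw [Subgroup.index_ker, hj]⟩
  · -- the kernel meets A inside K
    intro x hx
    rw [Subgroup.mem_subgroupOf] at hx
    rw [MonoidHom.mem_ker] at hx
    have e0 : μ (aG ↑x) + b ![(QuotientGroup.mk (↑x : G) : G ⧸ A)]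
        = -c.1 ![1, 1] := congrArg Prod.fst hx
    have hmk1 : (QuotientGroup.mk (↑x : G) : G ⧸ A) = 1 :=
      (QuotientGroup.eq_one_iff _).mpr x.2
    rw [hmk1] at e0
    have e2' : μ (aG 1) + b ![(QuotientGroup.mk (1 : G) : G ⧸ A)]
        = -c.1 ![1, 1] := congrArg Prod.fst (map_one φ)
    rw [QuotientGroup.mk_one] at e2'
    have haGx : aG (↑x : G) = x * aG 1 := by
      refine Subtype.ext ?_
      show (↑x : G) * (s (QuotientGroup.mk (↑x : G)))⁻¹
          = ↑x * (1 * (s (QuotientGroup.mk (1 : G)))⁻¹)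
      rw [hmk1, QuotientGroup.mk_one, one_mul]
    have e3 : μ (aG ↑x) = μ (aG 1) := by
      have := e0.trans e2'.symm
      exact add_right_cancel this
    rw [haGx, μmul] at e3
    have e4 : μ x = 0 := by
      have := e3
      rwa [add_eq_right] at this
    have e5 : (QuotientGroup.mk x : ↥A ⧸ K) = 1 := e4
    exact (QuotientGroup.eq_one_iff x).mp e5

end GoodProfinite
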